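/- Let p ≥ 1 and ω a primitive p-th root of unity. Then 1 - ∏_{j=1}^{p} (1 - ω^j x - ω^{j(p-1)} y) = x^p + y^p + ∑_{j=1}^{⌊p/2⌋} (-1)^{j-1} k_j x^j y^j for some positive real coefficients k_j. -/

import Mathlib

open MvPolynomial Finset

def ee : ℕ → ℕ → ℕ
  | 0, _ => 0
  | 1, j => if j = 0 then 1 else 0
  | 2, j => if j = 0 then 1 else if j = 1 then 2 else 0
  | (n+3), j => ee (n+2) j + (if j = 0 then 0 else ee (n+1) (j-1))

theorem ee0 (j : ℕ) : ee 0 j = 0 := by rw [ee]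
theorem ee1 (j : ℕ) : ee 1 j = if j = 0 then 1 else 0 := by rw [ee]
theorem ee2 (j : ℕ) : ee 2 j = if j = 0 then 1 else if j = 1 then 2 else 0 := by rw [ee]
theorem ee3 (n j : ℕ) : ee (n+3) j = ee (n+2) j + (if j = 0 then 0 else ee (n+1) (j-1)) := by
  rw [ee]

theorem ee_zero : ∀ n, 1 ≤ n → ee n 0 = 1
  | 1, _ => by simp [ee1]
  | 2, _ => by simp [ee2]
  | (n+3), _ => by simp [ee3, ee_zero (n+2) (by omega)]

theorem ee_big : ∀ n j, n < 2 * j → ee n j = 0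
  | 0, j, h => by simp [ee0]
  | 1, j, h => by
      have : j ≠ 0 := by omega
      simp [ee1, this]
  | 2, j, h => by
      have h1 : j ≠ 0 := by omega
      have h2 : j ≠ 1 := by omega
      simp [ee2, h1, h2]
  | (n+3), j, h => by
      have hj : j ≠ 0 := by omega
      simp [ee3, hj, ee_big (n+2) j (by omega), ee_big (n+1) (j-1) (by omega)]

theorem ee_pos : ∀ n j, 1 ≤ j → 2 * j ≤ n → 1 ≤ ee n j
  | 0, j, h1, h2 => by omega
  | 1, j, h1, h2 => by omega
  | 2, j, h1, h2 => by
      have : j = 1 := by omega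
      subst this; simp [ee2]
  | (n+3), j, h1, h2 => by
      have hj : j ≠ 0 := by omega
      rw [ee3, if_neg hj]
      by_cases h : 2 * j ≤ n + 2
      · have := ee_pos (n+2) j h1 h
        omega
      · have := ee_pos (n+1) (j-1) (by omega) (by omega)
        omega

theorem prod_one_sub {p : ℕ} (hp : 0 < p) {ζ : ℂ} (hζ : IsPrimitiveRoot ζ p) (b : ℂ) :
    ∏ i ∈ range p, (1 - b * ζ ^ i) = 1 - b ^ p := by
  have h := X_pow_sub_C_eq_prod hζ hp (rfl : b ^ p = b ^ p)
  have h2 := congrArg (Polynomial.eval 1) h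
  simpa [Polynomial.eval_prod, mul_comm] using h2.symm

theorem prod_one_sub_Icc {p : ℕ} (hp : 0 < p) {ζ : ℂ} (hζ : IsPrimitiveRoot ζ p) (b : ℂ) :
    ∏ j ∈ Icc 1 p, (1 - b * ζ ^ j) = 1 - b ^ p := by
  have h1 : Icc 1 p = insert p (Ico 1 p) := by
    ext a; simp only [Finset.mem_Icc, Finset.mem_insert, Finset.mem_Ico]; omega
  have h2 : range p = insert 0 (Ico 1 p) := by
    ext a; simp only [Finset.mem_range, Finset.mem_insert, Finset.mem_Ico]; omega
  rw [← prod_one_sub hp hζ b, h1, h2, Finset.prod_insert (by simp),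
    Finset.prod_insert (by simp), hζ.pow_eq_one, pow_zero]


theorem factor_term (p : ℕ) (hp : 1 ≤ p) (ω : ℂ) (hω : IsPrimitiveRoot ω p)
    (x y c : ℂ) (hc0 : c ≠ 0) (hq : c ^ 2 - c + x * y = 0) (j : ℕ) :
    1 - ω ^ j * x - ω ^ (j * (p - 1)) * y
      = c * (1 - x / c * ω ^ j) * (1 - y / c * (ω⁻¹) ^ j) := by
  have hω0 : ω ≠ 0 := hω.ne_zero (by omega)
  have hinv : ω ^ (j * (p - 1)) = (ω⁻¹) ^ j := by
    have hmul : ω ^ (j * (p - 1)) * ω ^ j = 1 := by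
      rw [← pow_add]
      have : j * (p - 1) + j = p * j := by
        cases p with
        | zero => omega
        | succ q => rw [Nat.add_sub_cancel]; ring
      rw [this, pow_mul, hω.pow_eq_one, one_pow]
    rw [inv_pow]
    exact eq_inv_of_mul_eq_one_left hmul
  rw [hinv]
  have ht : (ω : ℂ) ^ j ≠ 0 := pow_ne_zero _ hω0
  have ht' : ((ω⁻¹ : ℂ)) ^ j ≠ 0 := pow_ne_zero _ (inv_ne_zero hω0)
  have hrel : (ω⁻¹) ^ j * ω ^ j = 1 := by
    rw [inv_pow, inv_mul_cancel₀ ht]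
  field_simp
  ring_nf
  linear_combination (-1) * hq - x * y * hrel

theorem power_sum (c d m : ℂ) (h1 : c + d = 1) (hm : c * d = m) :
    ∀ n, 1 ≤ n → c ^ n + d ^ n = ∑ j ∈ range (n+1), (-1:ℂ)^j * (ee n j : ℂ) * m ^ j
  | 1, _ => by
      rw [Finset.sum_range_succ, Finset.sum_range_succ, Finset.sum_range_zero]
      simp [ee1]
      linear_combination h1
  | 2, _ => by
      rw [Finset.sum_range_succ, Finset.sum_range_succ, Finset.sum_range_succ,
        Finset.sum_range_zero]
      simp [ee2]
      linear_combination (c + d + 1) * h1 - 2 * hm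
  | (n+3), _ => by
      have hc2 : c^2 = c - m := by linear_combination c * h1 - hm
      have hd2 : d^2 = d - m := by linear_combination d * h1 - hm
      have key : c^(n+3) + d^(n+3) = (c^(n+2) + d^(n+2)) - m * (c^(n+1) + d^(n+1)) := by
        linear_combination (c^(n+1)) * hc2 + (d^(n+1)) * hd2
      rw [key, power_sum c d m h1 hm (n+2) (by omega), power_sum c d m h1 hm (n+1) (by omega)]
      have split : ∀ j : ℕ, (-1:ℂ)^j * (ee (n+3) j : ℂ) * m ^ j
          = (-1:ℂ)^j * (ee (n+2) j : ℂ) * m ^ j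
            + (if j = 0 then (0:ℂ) else (-1:ℂ)^j * (ee (n+1) (j-1) : ℂ) * m ^ j) := by
        intro j
        rcases j with _ | j
        · simp [ee3]
        · rw [ee3, if_neg (Nat.succ_ne_zero j), if_neg (Nat.succ_ne_zero j)]
          push_cast
          ring
      rw [Finset.sum_congr rfl fun j _ => split j, Finset.sum_add_distrib]
      have e1 : ∑ j ∈ range (n+3+1), (-1:ℂ)^j * (ee (n+2) j : ℂ) * m ^ j
          = ∑ j ∈ range (n+3), (-1:ℂ)^j * (ee (n+2) j : ℂ) * m ^ j := by
        rw [Finset.sum_range_succ, ee_big (n+2) (n+3) (by omega)]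
        simp
      have e2 : ∑ j ∈ range (n+3+1),
            (if j = 0 then (0:ℂ) else (-1:ℂ)^j * (ee (n+1) (j-1) : ℂ) * m ^ j)
          = -m * ∑ j ∈ range (n+2), (-1:ℂ)^j * (ee (n+1) j : ℂ) * m ^ j := by
        rw [Finset.sum_range_succ']
        simp only [if_neg (Nat.succ_ne_zero _), if_pos rfl, add_zero, Nat.succ_sub_one]
        rw [Finset.sum_range_succ, ee_big (n+1) (n+2) (by omega)]
        push_cast
        rw [Finset.mul_sum]
        rw [mul_zero, zero_mul, add_zero]
        rw [add_zero]
        apply Finset.sum_congr rfl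
        intro i _
        ring
      rw [e1, e2]
      ring


theorem scalar_core (p : ℕ) (hp : 1 ≤ p) (ω : ℂ) (hω : IsPrimitiveRoot ω p)
    (x y c : ℂ) (hc0 : c ≠ 0) (hq : c ^ 2 - c + x * y = 0) :
    1 - ∏ j ∈ Icc 1 p, (1 - ω ^ j * x - ω ^ (j * (p - 1)) * y)
      = x ^ p + y ^ p
        + ∑ j ∈ Icc 1 (p / 2), (-1:ℂ) ^ (j - 1) * (ee p j : ℂ) * x ^ j * y ^ j := by
  have hp0 : 0 < p := hp
  have hprod : ∏ j ∈ Icc 1 p, (1 - ω ^ j * x - ω ^ (j * (p - 1)) * y)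
      = c ^ p * ((1 - (x / c) ^ p) * (1 - (y / c) ^ p)) := by
    rw [Finset.prod_congr rfl fun j _ => factor_term p hp ω hω x y c hc0 hq j]
    rw [Finset.prod_mul_distrib, Finset.prod_mul_distrib, Finset.prod_const,
      Nat.card_Icc, Nat.add_sub_cancel, prod_one_sub_Icc hp0 hω (x / c),
      prod_one_sub_Icc hp0 hω.inv (y / c), mul_assoc]
  have hxc : (x / c) ^ p * c ^ p = x ^ p := by
    rw [div_pow, div_mul_cancel₀ _ (pow_ne_zero p hc0)]
  have hyc : (y / c) ^ p * c ^ p = y ^ p := by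
    rw [div_pow, div_mul_cancel₀ _ (pow_ne_zero p hc0)]
  have hcd : c * (1 - c) = x * y := by linear_combination -hq
  have hxyc : (x / c) ^ p * ((y / c) ^ p * c ^ p) = (1 - c) ^ p := by
    rw [← mul_pow, ← mul_pow]
    congr 1
    field_simp
    linear_combination hq
  have hexp : ∏ j ∈ Icc 1 p, (1 - ω ^ j * x - ω ^ (j * (p - 1)) * y)
      = c ^ p + (1 - c) ^ p - x ^ p - y ^ p := by
    rw [hprod]
    ring_nf
    ring_nf at hxc hyc hxyc
    linear_combination hxyc - hxc - hyc
  rw [hexp]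
  have hps := power_sum c (1 - c) (x * y) (by ring) hcd p hp
  have hps' : c ^ p + (1 - c) ^ p
      = 1 + ∑ i ∈ range p, (-1:ℂ) ^ (i + 1) * (ee p (i + 1) : ℂ) * (x * y) ^ (i + 1) := by
    rw [hps, Finset.sum_range_succ']
    simp [ee_zero p hp]
    ring
  rw [hps']
  have htarget : ∑ j ∈ Icc 1 (p / 2), (-1:ℂ) ^ (j - 1) * (ee p j : ℂ) * x ^ j * y ^ j
      = ∑ j ∈ Icc 1 p, (-1:ℂ) ^ (j - 1) * (ee p j : ℂ) * x ^ j * y ^ j := by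
    apply Finset.sum_subset
    · intro a ha
      simp only [Finset.mem_Icc] at ha ⊢
      omega
    · intro a ha ha'
      simp only [Finset.mem_Icc] at ha ha'
      rw [ee_big p a (by omega)]
      simp
  rw [htarget]
  have hIcc : ∑ j ∈ Icc 1 p, (-1:ℂ) ^ (j - 1) * (ee p j : ℂ) * x ^ j * y ^ j
      = ∑ i ∈ range p, (-1:ℂ) ^ i * (ee p (i + 1) : ℂ) * x ^ (i + 1) * y ^ (i + 1) := by
    have : Icc 1 p = Ico 1 (p + 1) := by
      ext a; simp only [Finset.mem_Icc, Finset.mem_Ico]; omega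
    rw [this, Finset.sum_Ico_eq_sum_range]
    simp only [Nat.add_sub_cancel, Nat.add_sub_cancel_left]
    apply Finset.sum_congr rfl
    intro i _
    rw [Nat.add_comm 1 i]
  rw [hIcc]
  have hneg : ∑ i ∈ range p, (-1:ℂ)^i * (ee p (i+1) : ℂ) * x^(i+1) * y^(i+1)
       = -∑ i ∈ range p, (-1:ℂ)^(i+1) * (ee p (i+1) : ℂ) * (x*y)^(i+1) := by
    rw [← Finset.sum_neg_distrib]
    apply Finset.sum_congr rfl
    intro i _
    rw [mul_pow]
    ring
  rw [hneg]
  ring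

theorem stmt_1 (p : ℕ) (hp : 1 ≤ p) (ω : ℂ) (hω : IsPrimitiveRoot ω p) :
    ∃ k : ℕ → ℝ, (∀ j ∈ Finset.Icc 1 (p / 2), 0 < k j) ∧
      (1 - ∏ j ∈ Finset.Icc 1 p,
          (1 - C (ω ^ j) * X 0 - C (ω ^ (j * (p - 1))) * X 1) :
            MvPolynomial (Fin 2) ℂ)
        = X 0 ^ p + X 1 ^ p
            + ∑ j ∈ Finset.Icc 1 (p / 2),
                C ((-1 : ℂ) ^ (j - 1)) * C ((k j : ℂ)) * X 0 ^ j * X 1 ^ j := by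
  refine ⟨fun j => (ee p j : ℝ), ?_, ?_⟩
  · intro j hj
    simp only [Finset.mem_Icc] at hj
    have h1 := ee_pos p j hj.1 (by omega)
    have h2 : 0 < ee p j := by omega
    simp only []
    exact_mod_cast h2
  · apply MvPolynomial.funext
    intro v
    obtain ⟨Δ, hΔ⟩ := IsAlgClosed.exists_pow_nat_eq (1 - 4 * (v 0 * v 1)) (n := 2) (by norm_num)
    have hkey : ∃ c : ℂ, c ≠ 0 ∧ c ^ 2 - c + v 0 * v 1 = 0 := by
      by_cases h : (1 + Δ) / 2 = 0
      · refine ⟨(1 - Δ) / 2, ?_, by linear_combination hΔ / 4⟩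
        intro h2
        have h3 : (1 : ℂ) = 0 := by linear_combination h + h2
        exact one_ne_zero h3
      · exact ⟨(1 + Δ) / 2, h, by linear_combination hΔ / 4⟩
    obtain ⟨c, hc0, hq⟩ := hkey
    have hmain := scalar_core p hp ω hω (v 0) (v 1) c hc0 hq
    simp only [map_sub, map_one, map_add, map_sum, map_prod, map_mul, map_pow,
      eval_C, eval_X, MvPolynomial.eval_prod, MvPolynomial.eval_sum]
    rw [hmain]
    norm_cast
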